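/- In the hierarchical clustering process with parameter α ≥ 2 on points arriving one by one, the final partition C_i(t) at each scale t equals the partition of [i] into connected components of the graph on [i] where j,l are adjacent iff d(j,l) ≤ 2α^(t+1) after transitively closing through earlier scales; consequently, for every cluster C ∈ C_i(t) either (a) the new point i ∉ C and C is also a cluster of C_{i-1}(t), or (b) i ∈ C and C = {i} ∪ C₁ ∪ ⋯ ∪ C_p for some clusters C₁,…,C_p of C_{i-1}(t) (possibly p = 0). In other words, C_{i-1}(t) refines C_i(t). -/

import Mathlib

/-- The hierarchical clustering relation with parameter `α` on the point set `A ⊆ ℕ`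
(with distances `d`): `clusterRel d α A t x y` means that `x` and `y` lie in a common
cluster of the clustering `C_A(t)` at the end of phase `t`.  `C_A(0)` consists of
singletons, and phase `t+1` repeatedly merges clusters at distance less than
`2·α^(t+2)` — equivalently, takes the equivalence relation generated by pairs of
points of `A` at distance less than `2·α^(t+2)` together with the previous relation. -/
def clusterRel (d : ℕ → ℕ → ℝ) (α : ℝ) (A : Set ℕ) : ℕ → ℕ → ℕ → Prop
  | 0 => fun x y => x = y
  | (t + 1) => Relation.EqvGen
      (fun x y => clusterRel d α A t x y ∨ (x ∈ A ∧ y ∈ A ∧ d x y < 2 * α ^ (t + 2)))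

theorem clusterRel_refl (d : ℕ → ℕ → ℝ) (α : ℝ) (A : Set ℕ) :
    ∀ t x, clusterRel d α A t x x
  | 0, _ => rfl
  | (_ + 1), x => Relation.EqvGen.refl x

theorem clusterRel_symm (d : ℕ → ℕ → ℝ) (α : ℝ) (A : Set ℕ) :
    ∀ t x y, clusterRel d α A t x y → clusterRel d α A t y x
  | 0, _, _, h => h.symm
  | (_ + 1), _, _, h => h.symm _ _

theorem clusterRel_trans (d : ℕ → ℕ → ℝ) (α : ℝ) (A : Set ℕ) :
    ∀ t x y z, clusterRel d α A t x y → clusterRel d α A t y z → clusterRel d α A t x z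
  | 0, _, _, _, h, h' => h.trans h'
  | (_ + 1), _, _, _, h, h' => h.trans _ _ _ h'

theorem clusterRel_mono (d : ℕ → ℕ → ℝ) (α : ℝ) {A B : Set ℕ} (hAB : A ⊆ B) :
    ∀ t x y, clusterRel d α A t x y → clusterRel d α B t x y
  | 0, _, _, h => h
  | (t + 1), _, _, h =>
      Relation.EqvGen.mono
        (fun a b (hab : clusterRel d α A t a b ∨ _) => hab.imp (clusterRel_mono d α hAB t a b)
          (fun ⟨ha, hb, hd⟩ => ⟨hAB ha, hAB hb, hd⟩)) _ _ h

theorem clusterRel_key (d : ℕ → ℕ → ℝ) (α : ℝ) (i : ℕ) :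
    ∀ t x y, clusterRel d α (Set.Iic i) t x y →
      clusterRel d α (Set.Iic i) t x i ∨ clusterRel d α (Set.Iio i) t x y := by
  intro t
  induction t with
  | zero => intro x y h; exact Or.inr h
  | succ t ih =>
    intro x y h
    induction h with
    | rel a b hab =>
      rcases hab with hc | ⟨ha, hb, hd⟩
      · rcases ih a b hc with h1 | h2
        · exact Or.inl (Relation.EqvGen.rel _ _ (Or.inl h1))
        · exact Or.inr (Relation.EqvGen.rel _ _ (Or.inl h2))
      · by_cases hai : a = i
        · exact Or.inl (hai ▸ Relation.EqvGen.refl i)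
        · by_cases hbi : b = i
          · exact Or.inl (Relation.EqvGen.rel _ _ (Or.inr ⟨ha, hbi ▸ hb, hbi ▸ hd⟩))
          · exact Or.inr (Relation.EqvGen.rel _ _
              (Or.inr ⟨lt_of_le_of_ne ha hai, lt_of_le_of_ne hb hbi, hd⟩))
    | refl a => exact Or.inr (Relation.EqvGen.refl a)
    | symm a b hab ih' =>
      rcases ih' with h1 | h2
      · exact Or.inl ((hab.symm _ _).trans _ _ _ h1)
      · exact Or.inr (h2.symm _ _)
    | trans a b c hab hbc iha ihb =>
      rcases iha with h1 | h2
      · exact Or.inl h1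
      · rcases ihb with h3 | h4
        · exact Or.inl ((clusterRel_mono d α (Set.Iio_subset_Iic_self) (t+1) a b h2).trans _ _ _ h3)
        · exact Or.inr (h2.trans _ _ _ h4)

theorem stmt_10 (d : ℕ → ℕ → ℝ) (α : ℝ) (hα : 2 ≤ α)
    (hself : ∀ x, d x x = 0) (hsym : ∀ x y, d x y = d y x)
    (htri : ∀ x y z, d x z ≤ d x y + d y z)
    (hmin : ∀ x y, x ≠ y → 2 * α ≤ d x y)
    (i : ℕ) :
    -- C_{i-1}(t) refines C_i(t)
    (∀ t x y, clusterRel d α (Set.Iio i) t x y → clusterRel d α (Set.Iic i) t x y) ∧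
    -- (a) a cluster of C_i(t) not containing i is a cluster of C_{i-1}(t)
    (∀ t, ∀ x ∈ Set.Iio i, ¬ clusterRel d α (Set.Iic i) t x i →
      ∀ y, clusterRel d α (Set.Iic i) t x y ↔ clusterRel d α (Set.Iio i) t x y) ∧
    -- (b) the cluster of C_i(t) containing i is {i} together with a union of
    -- clusters of C_{i-1}(t), i.e. it is saturated with respect to C_{i-1}(t)
    (∀ t, ∀ y ∈ Set.Iio i, clusterRel d α (Set.Iic i) t i y →
      ∀ z, clusterRel d α (Set.Iio i) t y z → clusterRel d α (Set.Iic i) t i z) := by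
  refine ⟨fun t x y h => clusterRel_mono d α Set.Iio_subset_Iic_self t x y h, ?_, ?_⟩
  · intro t x _ hxi y
    constructor
    · intro h
      exact (clusterRel_key d α i t x y h).resolve_left hxi
    · exact clusterRel_mono d α Set.Iio_subset_Iic_self t x y
  · intro t y _ hiy z hyz
    exact clusterRel_trans d α (Set.Iic i) t i y z hiy
      (clusterRel_mono d α Set.Iio_subset_Iic_self t y z hyz)
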